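/- Let f : ℝⁿ → ℝⁿ be an analytic vector field with domain D ⊆ ℝⁿ, initial set X₀ ⊆ ℝⁿ and unsafe set U ⊆ ℝⁿ. Let φ, χ : ℝⁿ → ℝ and ψ : ℝ → ℝ be analytic, with χ(x) ≤ 0 for all x ∈ X₀, and let δ : ℝⁿ → ℝ be a polynomial with δ(x) ≥ 0 for all x. Assume: (a) φ(x) ≤ 0 for all x ∈ X₀; (b) L_f φ(x) − ψ(φ(x)) − δ(x)·χ(x) ≤ 0 for all x ∈ D; (c) φ(x) > 0 for all x ∈ U; (d) every analytic θ : [0,∞) → ℝ with θ′(t) = ψ(θ(t)) for all t ≥ 0 and θ(0) ≤ 0 satisfies θ(ξ) ≤ 0 for all ξ > 0, and for every c ≤ 0 such a solution with θ(0) = c exists. Then for every differentiable trajectory τ : [0,∞) → ℝⁿ with τ′(t) = f(τ(t)) for all t ≥ 0, τ(0) ∈ X₀ and τ(t) ∈ D for all t ≥ 0: if χ(τ(ξ)) ≤ 0 for all ξ ≥ 0, then φ(τ(ξ)) ≤ 0 for all ξ ≥ 0, and hence τ(ξ) ∉ U for all ξ ≥ 0. -/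

import Mathlib

open Set

/-- Comparison principle: if `g' ≤ ψ ∘ g` on `[0,∞)`, `θ` solves `θ' = ψ ∘ θ`,
`ψ` is `C¹`, and `g 0 ≤ θ 0`, then `g ≤ θ` on `[0,∞)`. -/
lemma comparison_principle {ψ : ℝ → ℝ} (hψ : ContDiff ℝ 1 ψ)
    {g θ : ℝ → ℝ} {g' : ℝ → ℝ}
    (hg : ∀ t ≥ (0:ℝ), HasDerivAt g (g' t) t)
    (hgb : ∀ t ≥ (0:ℝ), g' t ≤ ψ (g t))
    (hθd : ∀ t, AnalyticAt ℝ θ t)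
    (hθ : ∀ t ≥ (0:ℝ), deriv θ t = ψ (θ t))
    (h0 : g 0 ≤ θ 0) : ∀ s ≥ (0:ℝ), g s ≤ θ s := by
  intro s hs
  by_contra hcon
  push_neg at hcon
  have hθdiff : Differentiable ℝ θ := fun t => (hθd t).differentiableAt
  have hθcont : Continuous θ := hθdiff.continuous
  set h : ℝ → ℝ := fun t => g t - θ t with hh
  have hgc : ∀ t ∈ Icc (0:ℝ) s, ContinuousWithinAt g (Icc 0 s) t := fun t ht =>
    ((hg t ht.1).continuousAt).continuousWithinAt
  have hhc : ContinuousOn h (Icc 0 s) := fun t ht =>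
    ((hgc t ht).sub (hθcont.continuousAt.continuousWithinAt))
  have hs0 : h s > 0 := sub_pos.2 hcon
  have h00 : h 0 ≤ 0 := sub_nonpos.2 h0
  set T : Set ℝ := Icc 0 s ∩ h ⁻¹' (Iic 0) with hT
  have hTne : T.Nonempty := ⟨0, ⟨le_rfl, hs⟩, h00⟩
  have hTclosed : IsClosed T := hhc.preimage_isClosed_of_isClosed isClosed_Icc isClosed_Iic
  have hTbdd : BddAbove T := ⟨s, fun t ht => ht.1.2⟩
  set t₁ := sSup T with ht₁def
  have ht₁T : t₁ ∈ T := hTclosed.csSup_mem hTne hTbdd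
  have ht₁0 : 0 ≤ t₁ := ht₁T.1.1
  have ht₁s : t₁ ≤ s := ht₁T.1.2
  have ht₁h : h t₁ ≤ 0 := ht₁T.2
  have ht₁lt : t₁ < s := lt_of_le_of_ne ht₁s (fun he => by rw [he] at ht₁h; linarith)
  have hpos : ∀ t ∈ Ioc t₁ s, 0 < h t := by
    intro t ht
    by_contra hle
    push_neg at hle
    have : t ∈ T := ⟨⟨le_trans ht₁0 ht.1.le, ht.2⟩, hle⟩
    exact absurd (le_csSup hTbdd this) (not_le.2 ht.1)
  set A := g '' Icc 0 s ∪ θ '' Icc 0 s with hA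
  have hcomp : IsCompact A :=
    ((isCompact_Icc.image_of_continuousOn (fun t ht => hgc t ht)).union
      (isCompact_Icc.image hθcont))
  have hAne : A.Nonempty := ⟨g 0, Or.inl ⟨0, ⟨le_rfl, hs⟩, rfl⟩⟩
  obtain ⟨m, hmA, hm⟩ := hcomp.exists_isMinOn hAne continuousOn_id
  obtain ⟨M, hMA, hM⟩ := hcomp.exists_isMaxOn hAne continuousOn_id
  have hAsub : A ⊆ Icc m M := fun y hy => ⟨hm hy, hM hy⟩
  have hmM : m ≤ M := (hAsub hmA).2
  have hdc : Continuous (deriv ψ) := hψ.continuous_deriv le_rfl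
  obtain ⟨y₀, hy₀, hC⟩ := isCompact_Icc.exists_isMaxOn (Set.nonempty_Icc.2 hmM)
    (continuous_abs.comp hdc).continuousOn
  set C := |deriv ψ y₀| with hCdef
  have hC0 : 0 ≤ C := abs_nonneg _
  have hlip : ∀ a ∈ Icc m M, ∀ b ∈ Icc m M, ψ a - ψ b ≤ C * |a - b| := by
    intro a hab b hbb
    have := Convex.norm_image_sub_le_of_norm_deriv_le
      (f := ψ) (s := Icc m M) (fun x _ => hψ.differentiable one_ne_zero x)
      (fun x hx => by simpa [Real.norm_eq_abs] using hC hx)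
      (convex_Icc m M) hbb hab
    calc ψ a - ψ b ≤ |ψ a - ψ b| := le_abs_self _
      _ ≤ C * |a - b| := by simpa [Real.norm_eq_abs] using this
  set u : ℝ → ℝ := fun t => h t * Real.exp (-C * t) with hu
  have huderiv : ∀ t ∈ Ioo t₁ s, HasDerivAt u
      ((g' t - ψ (θ t)) * Real.exp (-C * t) + h t * (-C * Real.exp (-C * t))) t := by
    intro t ht
    have ht0 : (0:ℝ) ≤ t := le_trans ht₁0 ht.1.le
    have hθt : HasDerivAt θ (ψ (θ t)) t := by
      have := (hθdiff t).hasDerivAt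
      rwa [hθ t ht0] at this
    have hht : HasDerivAt h (g' t - ψ (θ t)) t := (hg t ht0).sub hθt
    have hexp : HasDerivAt (fun t : ℝ => Real.exp (-C * t)) (-C * Real.exp (-C * t)) t := by
      have := ((hasDerivAt_id t).const_mul (-C)).exp
      simpa [mul_comm] using this
    exact hht.mul hexp
  have hmem : ∀ t ∈ Icc (0:ℝ) s, g t ∈ Icc m M ∧ θ t ∈ Icc m M := fun t ht =>
    ⟨hAsub (Or.inl ⟨t, ht, rfl⟩), hAsub (Or.inr ⟨t, ht, rfl⟩)⟩
  have hderiv_nonpos : ∀ t ∈ Ioo t₁ s, deriv u t ≤ 0 := by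
    intro t ht
    rw [(huderiv t ht).deriv]
    have ht0 : (0:ℝ) ≤ t := le_trans ht₁0 ht.1.le
    have htIcc : t ∈ Icc (0:ℝ) s := ⟨ht0, ht.2.le⟩
    have hpos' : 0 < h t := hpos t ⟨ht.1, ht.2.le⟩
    have h1 : g' t - ψ (θ t) ≤ C * h t := by
      have h2 : g' t ≤ ψ (g t) := hgb t ht0
      have h3 : ψ (g t) - ψ (θ t) ≤ C * |g t - θ t| :=
        hlip _ (hmem t htIcc).1 _ (hmem t htIcc).2
      have h4 : |g t - θ t| = h t := abs_of_pos hpos'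
      rw [h4] at h3
      linarith
    have hexp : 0 < Real.exp (-C * t) := Real.exp_pos _
    nlinarith [hexp.le]
  have hucont : ContinuousOn u (Icc t₁ s) := by
    have : ContinuousOn h (Icc t₁ s) := hhc.mono (Icc_subset_Icc ht₁0 le_rfl)
    exact this.mul ((Real.continuous_exp.comp (continuous_const.mul continuous_id)).continuousOn)
  have hudiff : DifferentiableOn ℝ u (interior (Icc t₁ s)) := by
    rw [interior_Icc]
    exact fun t ht => ((huderiv t ht).differentiableAt).differentiableWithinAt
  have hanti : AntitoneOn u (Icc t₁ s) :=
    antitoneOn_of_deriv_nonpos (convex_Icc t₁ s) hucont hudiff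
      (by rw [interior_Icc]; exact hderiv_nonpos)
  have h1 : u s ≤ u t₁ := hanti ⟨le_rfl, ht₁s⟩ ⟨ht₁s, le_rfl⟩ ht₁s
  have h2 : u t₁ ≤ 0 := mul_nonpos_of_nonpos_of_nonneg ht₁h (Real.exp_pos _).le
  have h3 : 0 < u s := mul_pos hs0 (Real.exp_pos _)
  linarith

/-- Conditional barrier certificate: if `φ` satisfies the relaxed barrier
conditions in which the Lie-derivative bound is weakened by `δ·χ` with a
nonnegative polynomial `δ`, then along any trajectory on which `χ ≤ 0`
holds, `φ ≤ 0` holds as well, so the trajectory avoids the unsafe set `U`. -/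
theorem conditional_barrier {n : ℕ}
    (f : (Fin n → ℝ) → (Fin n → ℝ)) (D X₀ U : Set (Fin n → ℝ))
    (φ χ : (Fin n → ℝ) → ℝ) (ψ : ℝ → ℝ) (δ : (Fin n → ℝ) → ℝ)
    (hf : ∀ x, AnalyticAt ℝ f x)
    (hφa : ∀ x, AnalyticAt ℝ φ x)
    (hχa : ∀ x, AnalyticAt ℝ χ x)
    (hψa : ∀ y, AnalyticAt ℝ ψ y)
    (hχ0 : ∀ x ∈ X₀, χ x ≤ 0)
    (hδpoly : ∃ p : MvPolynomial (Fin n) ℝ, ∀ x, δ x = MvPolynomial.eval x p)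
    (hδ : ∀ x, 0 ≤ δ x)
    (ha : ∀ x ∈ X₀, φ x ≤ 0)
    (hb : ∀ x ∈ D, fderiv ℝ φ x (f x) - ψ (φ x) - δ x * χ x ≤ 0)
    (hcU : ∀ x ∈ U, 0 < φ x)
    (hd1 : ∀ θ : ℝ → ℝ, (∀ t, AnalyticAt ℝ θ t) →
      (∀ t ≥ (0:ℝ), deriv θ t = ψ (θ t)) → θ 0 ≤ 0 →
      ∀ ξ > (0:ℝ), θ ξ ≤ 0)
    (hd2 : ∀ c ≤ (0:ℝ), ∃ θ : ℝ → ℝ, (∀ t, AnalyticAt ℝ θ t) ∧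
      (∀ t ≥ (0:ℝ), deriv θ t = ψ (θ t)) ∧ θ 0 = c) :
    ∀ τ : ℝ → (Fin n → ℝ),
      (∀ t ≥ (0:ℝ), HasDerivAt τ (f (τ t)) t) →
      τ 0 ∈ X₀ → (∀ t ≥ (0:ℝ), τ t ∈ D) →
      (∀ ξ ≥ (0:ℝ), χ (τ ξ) ≤ 0) →
      (∀ ξ ≥ (0:ℝ), φ (τ ξ) ≤ 0) ∧ (∀ ξ ≥ (0:ℝ), τ ξ ∉ U) := by
  intro τ hτ hτ0 hτD hχτ
  have hψC : ContDiff ℝ 1 ψ := contDiff_iff_contDiffAt.2 fun y => (hψa y).contDiffAt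
  obtain ⟨θ, hθa, hθode, hθ0⟩ := hd2 0 le_rfl
  have hθle : ∀ ξ ≥ (0:ℝ), θ ξ ≤ 0 := by
    intro ξ hξ
    rcases eq_or_lt_of_le hξ with h | h
    · rw [← h, hθ0]
    · exact hd1 θ hθa hθode (le_of_eq hθ0) ξ h
  have hgd : ∀ t ≥ (0:ℝ), HasDerivAt (fun t => φ (τ t))
      ((fun t => fderiv ℝ φ (τ t) (f (τ t))) t) t := by
    intro t ht
    exact ((hφa (τ t)).differentiableAt.hasFDerivAt).comp_hasDerivAt t (hτ t ht)
  have hgb : ∀ t ≥ (0:ℝ), (fun t => fderiv ℝ φ (τ t) (f (τ t))) t ≤ ψ ((fun t => φ (τ t)) t) := by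
    intro t ht
    have h1 := hb (τ t) (hτD t ht)
    have h2 : δ (τ t) * χ (τ t) ≤ 0 := mul_nonpos_of_nonneg_of_nonpos (hδ _) (hχτ t ht)
    simp only
    linarith
  have h0 : (fun t => φ (τ t)) 0 ≤ θ 0 := by rw [hθ0]; exact ha _ hτ0
  have key : ∀ ξ ≥ (0:ℝ), φ (τ ξ) ≤ 0 := by
    intro ξ hξ
    have := comparison_principle hψC hgd hgb hθa hθode h0 ξ hξ
    exact this.trans (hθle ξ hξ)
  exact ⟨key, fun ξ hξ hU => absurd (key ξ hξ) (not_le.2 (hcU _ hU))⟩
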